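/- Let k, r1, r2, n, m, m', p, p' be positive integers with p, p' prime, kn+r2 = m·p, kn+r1 = m'·p', r1 > r2, and σ(m)(p-1) = σ(m')(p'-1). If σ(m)·m' = m·σ(m') and m > 1, then m' = m + r1 - r2. -/

import Mathlib

open ArithmeticFunction
open scoped ArithmeticFunction.sigma

theorem stmt1 (k r1 r2 n m m' p p' : ℕ)
    (hk : 0 < k) (hr2 : 0 < r2) (hn : 0 < n)
    (hm0 : 0 < m) (hm' : 0 < m')
    (hp : p.Prime) (hp' : p'.Prime)
    (h2 : k * n + r2 = m * p) (h1 : k * n + r1 = m' * p')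
    (hr : r2 < r1)
    (hσ : (σ 1 m : ℤ) * ((p : ℤ) - 1) = (σ 1 m' : ℤ) * ((p' : ℤ) - 1))
    (hprop : σ 1 m * m' = m * σ 1 m') (hm1 : 1 < m) :
    (m' : ℤ) = (m : ℤ) + (r1 : ℤ) - (r2 : ℤ) := by
  have hS : (σ 1 m : ℤ) ≠ 0 := by
    have : 0 < σ 1 m := by
      rw [sigma_one_apply]
      exact Finset.sum_pos (fun d hd => Nat.pos_of_mem_divisors hd)
        ⟨m, Nat.mem_divisors_self m hm0.ne'⟩
    exact_mod_cast this.ne'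
  have hprop' : (σ 1 m : ℤ) * (m' : ℤ) = (m : ℤ) * (σ 1 m' : ℤ) := by exact_mod_cast hprop
  have key : (σ 1 m : ℤ) * ((m : ℤ) * p - m) = (σ 1 m : ℤ) * ((m' : ℤ) * p' - m') := by
    linear_combination (m : ℤ) * hσ - ((p' : ℤ) - 1) * hprop'
  have key2 := mul_left_cancel₀ hS key
  have h2' : (k : ℤ) * n + r2 = (m : ℤ) * p := by exact_mod_cast h2
  have h1' : (k : ℤ) * n + r1 = (m' : ℤ) * p' := by exact_mod_cast h1
  linarith
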